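/- Let V be an n-dimensional real vector space with a nondegenerate symmetric bilinear form g of arbitrary signature. Every linear isometry φ of (V, g), i.e. every linear bijection with g(φ(v), φ(w)) = g(v, w) for all v, w ∈ V, is the composition of at most n reflections at nondegenerate hyperplanes. -/

import Mathlib

open Module LinearMap

namespace CD

universe u

variable {V : Type u} [AddCommGroup V] [Module ℝ V]

/-- Reflection in the hyperplane orthogonal to `v`. -/
noncomputable def refl (g : LinearMap.BilinForm ℝ V) (v : V) : V →ₗ[ℝ] V :=
  LinearMap.id - (2 / g v v) • (LinearMap.smulRight (g.flip v) v)

lemma refl_apply (g : LinearMap.BilinForm ℝ V) (v x : V) :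
    refl g v x = x - (2 * g x v / g v v) • v := by
  simp [refl, LinearMap.smul_apply, LinearMap.sub_apply, smul_smul]
  ring_nf

lemma refl_apply_self (g : LinearMap.BilinForm ℝ V) {v : V} (hv : g v v ≠ 0) :
    refl g v v = -v := by
  rw [refl_apply, mul_div_assoc, div_self hv]
  module

lemma refl_apply_ortho (g : LinearMap.BilinForm ℝ V) {v x : V} (hx : g x v = 0) :
    refl g v x = x := by
  rw [refl_apply, hx]
  simp

lemma refl_refl (g : LinearMap.BilinForm ℝ V) {v : V} (hv : g v v ≠ 0) (x : V) :
    refl g v (refl g v x) = x := by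
  simp only [refl_apply, map_sub, map_smul, LinearMap.sub_apply, LinearMap.smul_apply,
    smul_eq_mul]
  field_simp
  ring_nf
  module

lemma refl_bijective (g : LinearMap.BilinForm ℝ V) {v : V} (hv : g v v ≠ 0) :
    Function.Bijective (refl g v) :=
  Function.Involutive.bijective (refl_refl g hv)

lemma refl_isometry (g : LinearMap.BilinForm ℝ V) (hsymm : ∀ a b : V, g a b = g b a)
    {v : V} (hv : g v v ≠ 0) (x y : V) :
    g (refl g v x) (refl g v y) = g x y := by
  simp only [refl_apply, map_sub, map_smul, LinearMap.sub_apply, LinearMap.smul_apply,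
    smul_eq_mul]
  have h1 : g v y = g y v := hsymm v y
  field_simp
  ring_nf
  rw [h1]
  ring

/-- Product of the reflections determined by a list of vectors. -/
noncomputable def prodRefl (g : LinearMap.BilinForm ℝ V) (l : List V) : V →ₗ[ℝ] V :=
  (l.map (refl g)).prod

@[simp] lemma prodRefl_nil (g : LinearMap.BilinForm ℝ V) :
    prodRefl g [] = LinearMap.id := rfl

@[simp] lemma prodRefl_cons (g : LinearMap.BilinForm ℝ V) (a : V) (t : List V) :
    prodRefl g (a :: t) = (refl g a) ∘ₗ (prodRefl g t) := by
  simp [prodRefl, List.prod_cons]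
  rfl

lemma prodRefl_apply (g : LinearMap.BilinForm ℝ V) (l : List V) (x : V) :
    prodRefl g l x = l.foldr (fun v y => y - (2 * g y v / g v v) • v) x := by
  induction l with
  | nil => rfl
  | cons a t ih => simp [prodRefl_cons, ih, refl_apply]

lemma prodRefl_fixed (g : LinearMap.BilinForm ℝ V) (l : List V) (y : V)
    (h : ∀ a ∈ l, g y a = 0) : prodRefl g l y = y := by
  induction l with
  | nil => rfl
  | cons a t ih =>
    simp only [prodRefl_cons, LinearMap.comp_apply]
    rw [ih (fun b hb => h b (List.mem_cons_of_mem a hb)),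
      refl_apply_ortho g (h a (List.mem_cons_self))]

lemma coe_prodRefl (g : LinearMap.BilinForm ℝ V) (W : Submodule ℝ V) (l : List W) (y : W) :
    ((prodRefl (g.restrict W) l y : W) : V) = prodRefl g (l.map (Subtype.val)) (y : V) := by
  induction l with
  | nil => rfl
  | cons a t ih =>
    simp only [prodRefl_cons, LinearMap.comp_apply, List.map_cons]
    rw [← ih, refl_apply, refl_apply]
    simp only [LinearMap.BilinForm.restrict_apply]
    push_cast
    rfl

lemma det_prodMap {M N : Type*} [AddCommGroup M] [Module ℝ M] [FiniteDimensional ℝ M]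
    [AddCommGroup N] [Module ℝ N] [FiniteDimensional ℝ N]
    (f : M →ₗ[ℝ] M) (h : N →ₗ[ℝ] N) :
    LinearMap.det (f.prodMap h) = LinearMap.det f * LinearMap.det h := by
  classical
  let b₁ := finBasis ℝ M
  let b₂ := finBasis ℝ N
  rw [← LinearMap.det_toMatrix (b₁.prod b₂), ← LinearMap.det_toMatrix b₁ f,
    ← LinearMap.det_toMatrix b₂ h, LinearMap.toMatrix_prodMap b₁ b₂ f h,
    Matrix.det_fromBlocks_zero₂₁]

lemma det_eq_det_restrict_mul {V : Type*} [AddCommGroup V] [Module ℝ V] [FiniteDimensional ℝ V]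
    {U W : Submodule ℝ V} (h : IsCompl U W) (σ : V →ₗ[ℝ] V)
    (hU : ∀ u ∈ U, σ u ∈ U) (hW : ∀ w ∈ W, σ w ∈ W) :
    LinearMap.det σ =
      LinearMap.det (σ.restrict hU) * LinearMap.det (σ.restrict hW) := by
  let e := Submodule.prodEquivOfIsCompl U W h
  have key : (σ.restrict hU).prodMap (σ.restrict hW)
      = (e.symm : V →ₗ[ℝ] U × W) ∘ₗ σ ∘ₗ (e : U × W →ₗ[ℝ] V) := by
    refine LinearMap.ext fun x => ?_
    apply e.injective
    simp only [LinearMap.comp_apply, LinearEquiv.coe_coe, e.apply_symm_apply]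
    obtain ⟨u, w⟩ := x
    simp only [LinearMap.prodMap_apply]
    rw [Submodule.coe_prodEquivOfIsCompl', Submodule.coe_prodEquivOfIsCompl']
    simp only [LinearMap.restrict_coe_apply, map_add]
  rw [← det_prodMap, key]
  exact (LinearMap.det_conj σ e.symm).symm

lemma det_refl {V : Type*} [AddCommGroup V] [Module ℝ V] [FiniteDimensional ℝ V]
    (g : LinearMap.BilinForm ℝ V) (hsymm : ∀ a b : V, g a b = g b a)
    {v : V} (hv : g v v ≠ 0) : LinearMap.det (refl g v) = -1 := by
  have hv0 : v ≠ 0 := fun h => hv (by simp [h])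
  have hx : ¬ g.IsOrtho v v := hv
  have hcompl := LinearMap.BilinForm.isCompl_span_singleton_orthogonal (B := g) hx
  have hU : ∀ u ∈ (ℝ ∙ v), refl g v u ∈ (ℝ ∙ v) := by
    intro u hu
    obtain ⟨c, rfl⟩ := Submodule.mem_span_singleton.1 hu
    rw [map_smul, refl_apply_self g hv]
    exact Submodule.smul_mem _ c (Submodule.neg_mem _ (Submodule.mem_span_singleton_self v))
  have hW : ∀ w ∈ g.orthogonal (ℝ ∙ v), refl g v w ∈ g.orthogonal (ℝ ∙ v) := by
    intro w hw
    have h0 : g w v = 0 := by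
      rw [hsymm]
      exact hw v (Submodule.mem_span_singleton_self v)
    rw [refl_apply_ortho g h0]
    exact hw
  rw [det_eq_det_restrict_mul hcompl _ hU hW]
  have h1 : (refl g v).restrict hU = -LinearMap.id := by
    refine LinearMap.ext fun x => Subtype.ext ?_
    obtain ⟨c, hc⟩ := Submodule.mem_span_singleton.1 x.2
    have hxc : (x : V) = c • v := hc.symm
    simp only [LinearMap.restrict_coe_apply, LinearMap.neg_apply, LinearMap.id_coe, id_eq,
      Submodule.coe_neg, hxc, map_smul, refl_apply_self g hv, smul_neg]
  have h2 : (refl g v).restrict hW = LinearMap.id := by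
    refine LinearMap.ext fun x => Subtype.ext ?_
    have h0 : g (x : V) v = 0 := by
      rw [hsymm]
      exact x.2 v (Submodule.mem_span_singleton_self v)
    simp only [LinearMap.restrict_coe_apply, refl_apply_ortho g h0, LinearMap.id_coe, id_eq]
  rw [h1, h2, LinearMap.det_id, mul_one]
  have hneg : (-LinearMap.id : (ℝ ∙ v) →ₗ[ℝ] (ℝ ∙ v)) = (-1 : ℝ) • LinearMap.id :=
    (neg_one_smul ℝ _).symm
  rw [hneg, LinearMap.det_smul, LinearMap.det_id, finrank_span_singleton hv0]
  norm_num

lemma det_prodRefl {V : Type*} [AddCommGroup V] [Module ℝ V] [FiniteDimensional ℝ V]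
    (g : LinearMap.BilinForm ℝ V) (hsymm : ∀ a b : V, g a b = g b a)
    (l : List V) (hl : ∀ x ∈ l, g x x ≠ 0) :
    LinearMap.det (prodRefl g l) = (-1 : ℝ) ^ l.length := by
  induction l with
  | nil => simp
  | cons a t ih =>
    rw [prodRefl_cons, LinearMap.det_comp, det_refl g hsymm (hl a (List.mem_cons_self)),
      ih (fun x hx => hl x (List.mem_cons_of_mem a hx)), List.length_cons, pow_succ]
    ring

lemma quad_vanish {a b c A B : ℝ} (hc : c ≠ 0)
    (h : ∀ t : ℝ, c + b * t + a * t ^ 2 ≠ 0 → B * t + A * t ^ 2 = 0) :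
    A = 0 ∧ B = 0 := by
  classical
  set p : Polynomial ℝ := Polynomial.C c + Polynomial.C b * Polynomial.X
    + Polynomial.C a * Polynomial.X ^ 2 with hp
  set q : Polynomial ℝ := Polynomial.C B * Polynomial.X
    + Polynomial.C A * Polynomial.X ^ 2 with hq
  have hp0 : p ≠ 0 := by
    intro h0
    have := congrArg (Polynomial.eval 0) h0
    simp [hp] at this
    exact hc this
  have hsub : {t : ℝ | ¬ p.IsRoot t} ⊆ {t : ℝ | q.IsRoot t} := by
    intro t ht
    have hpt : c + b * t + a * t ^ 2 ≠ 0 := by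
      simpa [hp, Polynomial.IsRoot] using ht
    have := h t hpt
    simpa [hq, Polynomial.IsRoot] using this
  have hinf : {t : ℝ | q.IsRoot t}.Infinite := by
    refine Set.Infinite.mono hsub ?_
    have hfin : {t : ℝ | p.IsRoot t}.Finite := p.finite_setOf_isRoot hp0
    simpa [Set.compl_setOf] using hfin.infinite_compl
  have hq0 : q = 0 := Polynomial.eq_zero_of_infinite_isRoot q hinf
  constructor
  · have := congrArg (fun r => Polynomial.coeff r 2) hq0
    simpa [hq, Polynomial.coeff_X, Polynomial.coeff_one] using this
  · have := congrArg (fun r => Polynomial.coeff r 1) hq0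
    simpa [hq, Polynomial.coeff_X, Polynomial.coeff_one] using this

lemma exists_anisotropic {V : Type*} [AddCommGroup V] [Module ℝ V] [Nontrivial V]
    (g : LinearMap.BilinForm ℝ V) (hsymm : ∀ a b : V, g a b = g b a)
    (hnondeg : ∀ v : V, (∀ w : V, g v w = 0) → v = 0) :
    ∃ u : V, g u u ≠ 0 := by
  obtain ⟨x, hx0⟩ := exists_ne (0 : V)
  by_contra hall
  push_neg at hall
  have key : ∀ a b : V, g a b = 0 := by
    intro a b
    have h1 := hall (a + b)
    have h2 := hall a
    have h3 := hall b
    have h4 : g a b = g b a := hsymm a b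
    simp only [map_add, LinearMap.add_apply] at h1
    nlinarith [h1, h2, h3]
  exact hx0 (hnondeg x (fun w => key x w))

theorem aux : ∀ (n : ℕ) {V : Type u} [AddCommGroup V] [Module ℝ V] [FiniteDimensional ℝ V]
    (g : LinearMap.BilinForm ℝ V),
    Module.finrank ℝ V = n →
    (∀ a b : V, g a b = g b a) →
    (∀ v : V, (∀ w : V, g v w = 0) → v = 0) →
    ∀ φ : V →ₗ[ℝ] V, Function.Bijective φ →
    (∀ v w : V, g (φ v) (φ w) = g v w) →
    ∃ l : List V, l.length ≤ n ∧ (∀ v ∈ l, g v v ≠ 0) ∧ φ = prodRefl g l := by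
  intro n
  induction n using Nat.strong_induction_on with
  | _ n IH =>
  intro V _ _ _ g hdim hsymm hnondeg φ hbij hiso
  -- Reduction when an anisotropic vector is fixed
  have step1 : ∀ ψ : V →ₗ[ℝ] V, Function.Bijective ψ → (∀ v w, g (ψ v) (ψ w) = g v w) →
      ∀ v : V, g v v ≠ 0 → ψ v = v →
      ∃ l : List V, l.length + 1 ≤ n ∧ (∀ x ∈ l, g x x ≠ 0) ∧ ψ = prodRefl g l := by
    intro ψ hbijψ hisoψ v hv hfixv
    have hv0 : v ≠ 0 := fun h => hv (by simp [h])
    have hVnt : Nontrivial V := ⟨v, 0, hv0⟩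
    have hn1 : 1 ≤ n := by rw [← hdim]; exact Module.finrank_pos
    have hgsymm' : g.IsSymm := ⟨fun a b => hsymm a b⟩
    have hrefl : g.IsRefl := hgsymm'.isRefl
    have hgnd : g.Nondegenerate := (LinearMap.IsRefl.nondegenerate_iff_separatingLeft hrefl).2 hnondeg
    set W := g.orthogonal (ℝ ∙ v) with hWdef
    have hWrank : finrank ℝ W = n - 1 := by
      rw [hWdef, LinearMap.BilinForm.finrank_orthogonal hgnd,
        finrank_span_singleton hv0, hdim]
    have memW : ∀ x : V, x ∈ W ↔ g v x = 0 := by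
      intro x
      constructor
      · intro hx; exact hx v (Submodule.mem_span_singleton_self v)
      · intro h0 w hw
        obtain ⟨c, rfl⟩ := Submodule.mem_span_singleton.1 hw
        show g (c • v) x = 0
        rw [map_smul, LinearMap.smul_apply, smul_eq_mul, h0, mul_zero]
    have hmap : ∀ x ∈ W, ψ x ∈ W := by
      intro x hx
      rw [memW] at hx ⊢
      calc g v (ψ x) = g (ψ v) (ψ x) := by rw [hfixv]
        _ = g v x := hisoψ v x
        _ = 0 := hx
    set gW := g.restrict W with hgW
    have hsymmW : ∀ a b : W, gW a b = gW b a := by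
      intro a b
      simp only [hgW, LinearMap.BilinForm.restrict_apply]
      exact hsymm a b
    have hndW : ∀ x : W, (∀ y : W, gW x y = 0) → x = 0 :=
      LinearMap.BilinForm.restrict_nondegenerate_orthogonal_spanSingleton g hgnd hrefl hv |>.1
    set ψW := ψ.restrict hmap with hψW
    have hbijW : Function.Bijective ψW := by
      constructor
      · intro x y hxy
        have : ψ (x : V) = ψ (y : V) := by
          have h1 := congrArg (Subtype.val) hxy
          simpa [hψW, LinearMap.restrict_coe_apply] using h1
        exact Subtype.ext (hbijψ.1 this)
      · intro y
        obtain ⟨x, hx⟩ := hbijψ.2 (y : V)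
        have hxW : x ∈ W := by
          rw [memW]
          calc g v x = g (ψ v) (ψ x) := (hisoψ v x).symm
            _ = g v (y : V) := by rw [hfixv, hx]
            _ = 0 := (memW (y : V)).1 y.2
        exact ⟨⟨x, hxW⟩, Subtype.ext (by rw [LinearMap.restrict_coe_apply]; exact hx)⟩
    have hisoW : ∀ a b : W, gW (ψW a) (ψW b) = gW a b := by
      intro a b
      simp only [hgW, LinearMap.BilinForm.restrict_apply, hψW, LinearMap.restrict_coe_apply]
      exact hisoψ a b
    obtain ⟨lW, hlen, hanis, hprod⟩ :=
      IH (n - 1) (by omega) gW hWrank hsymmW hndW ψW hbijW hisoW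
    refine ⟨lW.map (Subtype.val), ?_, ?_, ?_⟩
    · rw [List.length_map]; omega
    · intro x hx
      obtain ⟨xw, hxw, rfl⟩ := List.mem_map.1 hx
      have := hanis xw hxw
      simpa [hgW, LinearMap.BilinForm.restrict_apply] using this
    · have hcompl : IsCompl (ℝ ∙ v) W :=
        LinearMap.BilinForm.isCompl_span_singleton_orthogonal hv
      refine LinearMap.ext fun x => ?_
      have hxmem : x ∈ (ℝ ∙ v) ⊔ W := by rw [hcompl.codisjoint.eq_top]; trivial
      obtain ⟨a, ha, b, hb, rfl⟩ := Submodule.mem_sup.1 hxmem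
      rw [map_add, map_add]
      congr 1
      · obtain ⟨c, rfl⟩ := Submodule.mem_span_singleton.1 ha
        rw [map_smul, hfixv, map_smul, prodRefl_fixed]
        intro t ht
        obtain ⟨tw, htw, rfl⟩ := List.mem_map.1 ht
        exact (memW (tw : V)).1 tw.2
      · have hcoe : ψ b = ((ψW ⟨b, hb⟩ : W) : V) := by
          rw [hψW, LinearMap.restrict_coe_apply]
        rw [hcoe, hprod, hgW, coe_prodRefl]
  -- trivial case
  by_cases hid : φ = LinearMap.id
  · exact ⟨[], by simp, by simp, by rw [hid, prodRefl_nil]⟩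
  have hVnt : Nontrivial V := by
    by_contra h
    rw [not_nontrivial_iff_subsingleton] at h
    exact hid (LinearMap.ext fun x => Subsingleton.elim _ _)
  have hn1 : 1 ≤ n := by rw [← hdim]; exact Module.finrank_pos
  by_cases hfix : ∃ v, g v v ≠ 0 ∧ φ v = v
  · obtain ⟨v, hv, hf⟩ := hfix
    obtain ⟨l, hl, ha, hp⟩ := step1 φ hbij hiso v hv hf
    exact ⟨l, by omega, ha, hp⟩
  have step2 : ∀ z : V, g z z ≠ 0 → ∀ v : V, g v v ≠ 0 → refl g z (φ v) = v →
      ∃ l, l.length ≤ n ∧ (∀ x ∈ l, g x x ≠ 0) ∧ φ = prodRefl g l := by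
    intro z hz v hv hrv
    set φ' := (refl g z) ∘ₗ φ with hφ'
    have hb' : Function.Bijective φ' := (refl_bijective g hz).comp hbij
    have hi' : ∀ a b, g (φ' a) (φ' b) = g a b := by
      intro a b
      rw [hφ']
      simp only [LinearMap.comp_apply]
      rw [refl_isometry g hsymm hz, hiso]
    have hf' : φ' v = v := by
      rw [hφ']; simpa using hrv
    obtain ⟨l, hl, ha, hp⟩ := step1 φ' hb' hi' v hv hf'
    refine ⟨z :: l, by simpa using hl, ?_, ?_⟩
    · intro x hx
      rcases List.mem_cons.1 hx with h | h
      · rw [h]; exact hz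
      · exact ha x h
    · rw [prodRefl_cons, ← hp, hφ']
      refine LinearMap.ext fun x => ?_
      simp only [LinearMap.comp_apply]
      rw [refl_refl g hz]
  by_cases hmove : ∃ v, g v v ≠ 0 ∧ g (φ v - v) (φ v - v) ≠ 0
  · obtain ⟨v, hv, hw⟩ := hmove
    set z := φ v - v with hzdef
    have key : g z z = 2 * g (φ v) z := by
      have h1 := hiso v v
      have h2 := hsymm (φ v) v
      simp only [hzdef, map_sub, LinearMap.sub_apply]
      linarith
    have hzv : refl g z (φ v) = v := by
      rw [refl_apply, show (2 : ℝ) * g (φ v) z = g z z from key.symm, div_self hw, one_smul,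
        hzdef, sub_sub_cancel]
    exact step2 z hw v hv hzv
  -- hard case
  push_neg at hfix hmove
  obtain ⟨u, hu⟩ := exists_anisotropic g hsymm hnondeg
  have expand : ∀ (A C : V) (t : ℝ), g (A + t • C) (A + t • C)
      = g A A + (g A C + g C A) * t + g C C * t ^ 2 := by
    intro A C t
    simp only [map_add, map_smul, LinearMap.add_apply, LinearMap.smul_apply, smul_eq_mul]
    ring
  have hB : ∀ y : V, g (φ y - y) (φ y - y) = 0 := by
    intro y
    have hq : ∀ t : ℝ, g u u + 2 * g u y * t + g y y * t ^ 2 ≠ 0 →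
        2 * g (φ u - u) (φ y - y) * t + g (φ y - y) (φ y - y) * t ^ 2 = 0 := by
      intro t ht
      have hne : g (u + t • y) (u + t • y) ≠ 0 := by
        rw [expand]
        intro h0
        apply ht
        have hc : g u y + g y u = 2 * g u y := by rw [hsymm y u]; ring
        rw [hc] at h0
        linarith [h0]
      have h0 := hmove (u + t • y) hne
      have hdec : φ (u + t • y) - (u + t • y) = (φ u - u) + t • (φ y - y) := by
        rw [map_add, map_smul]
        module
      rw [hdec, expand] at h0
      have hBu := hmove u hu
      have hcross : g (φ y - y) (φ u - u) = g (φ u - u) (φ y - y) := hsymm _ _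
      rw [hBu, hcross] at h0
      linarith
    exact (quad_vanish hu hq).1
  have hB2 : ∀ x y : V, g (φ x - x) (φ y - y) = 0 := by
    intro x y
    have h1 := hB (x + y)
    have hd : φ (x + y) - (x + y) = (φ x - x) + (φ y - y) := by
      rw [map_add]; abel
    rw [hd] at h1
    have h2 : g ((φ x - x) + (φ y - y)) ((φ x - x) + (φ y - y))
        = g (φ x - x) (φ x - x) + (g (φ x - x) (φ y - y) + g (φ y - y) (φ x - x))
          + g (φ y - y) (φ y - y) := by
      simp only [map_add, LinearMap.add_apply]; ring
    rw [h2, hB x, hB y] at h1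
    have h3 := hsymm (φ y - y) (φ x - x)
    linarith
  have hskew : ∀ x y : V, g x (φ y - y) = - g (φ x - x) y := by
    intro x y
    have h1 := hiso x y
    have h2 : g ((φ x - x) + x) ((φ y - y) + y) = g x y := by
      rw [sub_add_cancel, sub_add_cancel]; exact h1
    have h3 : g ((φ x - x) + x) ((φ y - y) + y)
        = g (φ x - x) (φ y - y) + g (φ x - x) y + g x (φ y - y) + g x y := by
      simp only [map_add, LinearMap.add_apply]; ring
    rw [h3, hB2 x y] at h2
    linarith
  have hf2 : ∀ x : V, φ (φ x - x) - (φ x - x) = 0 := by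
    intro x
    apply hnondeg
    intro w
    have h1 : g w (φ (φ x - x) - (φ x - x)) = - g (φ w - w) (φ x - x) := hskew w (φ x - x)
    have h2 : g (φ w - w) (φ x - x) = 0 := hB2 w x
    have h3 : g w (φ (φ x - x) - (φ x - x)) = 0 := by rw [h1, h2, neg_zero]
    rw [hsymm]
    exact h3
  -- determinant of φ is positive
  set f : V →ₗ[ℝ] V := φ - LinearMap.id with hfdef
  have hfapp : ∀ x : V, f x = φ x - x := fun x => rfl
  have hffapp : ∀ x : V, f (f x) = 0 := by
    intro x
    rw [hfapp, hfapp]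
    exact hf2 x
  set ψ : V →ₗ[ℝ] V := LinearMap.id + (2⁻¹ : ℝ) • f with hψdef
  have hψψ : ψ ∘ₗ ψ = φ := by
    refine LinearMap.ext fun x => ?_
    simp only [LinearMap.comp_apply, hψdef, LinearMap.add_apply, LinearMap.smul_apply,
      LinearMap.id_apply, map_add, map_smul]
    rw [hffapp x]
    rw [hfapp]
    module
  have hψinv : ψ ∘ₗ (LinearMap.id - (2⁻¹ : ℝ) • f) = LinearMap.id := by
    refine LinearMap.ext fun x => ?_
    simp only [LinearMap.comp_apply, hψdef, LinearMap.add_apply, LinearMap.sub_apply,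
      LinearMap.smul_apply, LinearMap.id_apply, map_sub, map_smul]
    rw [hffapp x]
    module
  have hdetψ : LinearMap.det ψ ≠ 0 := by
    intro h0
    have := congrArg LinearMap.det hψinv
    rw [LinearMap.det_comp, h0, zero_mul, LinearMap.det_id] at this
    exact zero_ne_one this
  have hdetφpos : 0 < LinearMap.det φ := by
    have h1 : LinearMap.det φ = (LinearMap.det ψ) ^ 2 := by
      rw [← hψψ, LinearMap.det_comp, sq]
    rw [h1]
    positivity
  -- n is even
  have hneven : Even n := by
    have hgsymm' : g.IsSymm := ⟨fun a b => hsymm a b⟩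
    have hrefl : g.IsRefl := hgsymm'.isRefl
    have hgnd : g.Nondegenerate := (LinearMap.IsRefl.nondegenerate_iff_separatingLeft hrefl).2 hnondeg
    set U := LinearMap.ker f with hU
    have hker : ∀ z, z ∈ U → φ z = z := by
      intro z hz
      have h0 : f z = 0 := hz
      rw [hfapp] at h0
      exact sub_eq_zero.1 h0
    have hself : ∀ z ∈ U, g z z = 0 := by
      intro z hz
      by_contra h
      exact hfix z h (hker z hz)
    have hUiso : ∀ x ∈ U, ∀ y ∈ U, g x y = 0 := by
      intro x hx y hy
      have h1 := hself (x + y) (add_mem hx hy)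
      have h2 := hself x hx
      have h3 := hself y hy
      have h4 : g (x + y) (x + y) = g x x + (g x y + g y x) + g y y := by
        simp only [map_add, LinearMap.add_apply]; ring
      have h5 := hsymm y x
      rw [h4, h2, h3] at h1
      linarith
    have hUle : U ≤ g.orthogonal U := by
      intro x hx
      intro t ht
      exact hUiso t ht x hx
    have hrange : LinearMap.range f ≤ U := by
      rintro _ ⟨x, rfl⟩
      exact LinearMap.mem_ker.2 (hffapp x)
    have hd1 : finrank ℝ (g.orthogonal U) = n - finrank ℝ U := by
      rw [LinearMap.BilinForm.finrank_orthogonal hgnd, hdim]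
    have hd2 : finrank ℝ U ≤ n - finrank ℝ U := by
      rw [← hd1]
      exact Submodule.finrank_mono hUle
    have hd3 : finrank ℝ (LinearMap.range f) + finrank ℝ U = n := by
      rw [← hdim]
      exact LinearMap.finrank_range_add_finrank_ker f
    have hd4 : finrank ℝ (LinearMap.range f) ≤ finrank ℝ U :=
      Submodule.finrank_mono hrange
    have hUlen : finrank ℝ U ≤ n := by omega
    refine ⟨finrank ℝ U, by omega⟩
  -- construct the two auxiliary reflections
  set w := φ u - u with hwdef
  have hw0 : g w w = 0 := hmove u hu
  set z := φ u + u with hzdef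
  have hgphi : g (φ u) u = g u u := by
    have h1 := hiso u u
    have h2 : g w w = g (φ u) (φ u) - g (φ u) u - g u (φ u) + g u u := by
      simp only [hwdef, map_sub, LinearMap.sub_apply]; ring
    have h3 := hsymm u (φ u)
    rw [hw0, h1] at h2
    linarith
  have hzz : g z z = 4 * g u u := by
    have h1 := hiso u u
    have h2 : g z z = g (φ u) (φ u) + g (φ u) u + g u (φ u) + g u u := by
      simp only [hzdef, map_add, LinearMap.add_apply]; ring
    have h3 := hsymm u (φ u)
    rw [h2, h1, hgphi, h3, hgphi]
    ring
  have hz : g z z ≠ 0 := by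
    rw [hzz]
    intro h0
    apply hu
    linarith
  have hkey : g z z = 2 * g (φ u) z := by
    have h1 := hiso u u
    simp only [hzdef, map_add, LinearMap.add_apply]
    have h3 := hsymm u (φ u)
    rw [h1]
    have : g (φ u) (φ u) = g u u := hiso u u
    linarith [hgphi]
  have hrz : refl g z (φ u) = -u := by
    rw [refl_apply, show (2 : ℝ) * g (φ u) z = g z z from hkey.symm, div_self hz, one_smul,
      hzdef]
    abel
  set φ' := (refl g u) ∘ₗ ((refl g z) ∘ₗ φ) with hφ'
  have hf'u : φ' u = u := by
    rw [hφ']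
    simp only [LinearMap.comp_apply]
    rw [hrz, map_neg, refl_apply_self g hu, neg_neg]
  have hb' : Function.Bijective φ' :=
    (refl_bijective g hu).comp ((refl_bijective g hz).comp hbij)
  have hi' : ∀ a b, g (φ' a) (φ' b) = g a b := by
    intro a b
    rw [hφ']
    simp only [LinearMap.comp_apply]
    rw [refl_isometry g hsymm hu, refl_isometry g hsymm hz, hiso]
  obtain ⟨l, hlen1, hanis, hprod⟩ := step1 φ' hb' hi' u hu hf'u
  have hdet' : LinearMap.det φ' = LinearMap.det φ := by
    rw [hφ', LinearMap.det_comp, LinearMap.det_comp, det_refl g hsymm hu, det_refl g hsymm hz]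
    ring
  have hdetl : LinearMap.det φ' = (-1 : ℝ) ^ l.length := by
    rw [hprod, det_prodRefl g hsymm l hanis]
  have heven_len : Even l.length := by
    rcases Nat.even_or_odd l.length with h | h
    · exact h
    · exfalso
      have h1 : (-1 : ℝ) ^ l.length = -1 := Odd.neg_one_pow h
      rw [hdetl, h1] at hdet'
      linarith
  obtain ⟨k, hk⟩ := heven_len
  obtain ⟨m, hm⟩ := hneven
  refine ⟨z :: u :: l, ?_, ?_, ?_⟩
  · simp only [List.length_cons]
    omega
  · intro x hx
    rcases List.mem_cons.1 hx with h | h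
    · rw [h]; exact hz
    rcases List.mem_cons.1 h with h' | h'
    · rw [h']; exact hu
    · exact hanis x h'
  · rw [prodRefl_cons, prodRefl_cons, ← hprod, hφ']
    refine LinearMap.ext fun x => ?_
    simp only [LinearMap.comp_apply]
    rw [refl_refl g hu, refl_refl g hz]

end CD

/-- **Cartan–Dieudonné.** Every linear isometry of an `n`-dimensional real
vector space with a nondegenerate symmetric bilinear form is the composition of at most
`n` reflections at nondegenerate hyperplanes. -/
theorem cartan_dieudonne
    {V : Type*} [AddCommGroup V] [Module ℝ V] [FiniteDimensional ℝ V]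
    {n : ℕ} (hdim : Module.finrank ℝ V = n)
    (g : V →ₗ[ℝ] V →ₗ[ℝ] ℝ)
    (hsymm : ∀ v w : V, g v w = g w v)
    (hnondeg : ∀ v : V, (∀ w : V, g v w = 0) → v = 0)
    (φ : V →ₗ[ℝ] V) (hbij : Function.Bijective φ)
    (hiso : ∀ v w : V, g (φ v) (φ w) = g v w) :
    ∃ l : List V, l.length ≤ n ∧ (∀ v ∈ l, g v v ≠ 0) ∧
      ∀ x : V, φ x = l.foldr (fun v y => y - (2 * g y v / g v v) • v) x := by
  obtain ⟨l, h1, h2, h3⟩ := CD.aux n g hdim hsymm hnondeg φ hbij hiso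
  exact ⟨l, h1, h2, fun x => by rw [h3, CD.prodRefl_apply]⟩
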